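/- A matrix L in the group of (n+1)×(n+1) lower unitriangular real matrices is totally positive (all minors det(L_{i₀,i₁}) with row set i₀ ≥ i₁ componentwise are positive) implies: if L₀ is totally positive and L₁ lies in the closure of the set of totally positive lower unitriangular matrices (all such minors nonnegative), then both L₀L₁ and L₁L₀ are totally positive. Moreover, the closure of the totally positive matrices is closed under multiplication. -/
import Mathlib


open Matrix

/-- A lower unitriangular matrix. -/
def LowerUni {n : ℕ} (L : Matrix (Fin n) (Fin n) ℝ) : Prop :=
  (∀ i, L i i = 1) ∧ ∀ i j : Fin n, i < j → L i j = 0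

/-- `L` is totally positive (as a lower unitriangular matrix): every minor
`det(L_{i₀,i₁})` with row set `i₀ ≥ i₁` componentwise (both written in increasing
order, i.e. given by strictly monotone index maps) is positive. -/
def TotPos {n : ℕ} (L : Matrix (Fin n) (Fin n) ℝ) : Prop :=
  ∀ (k : ℕ) (r c : Fin k → Fin n), StrictMono r → StrictMono c →
    (∀ m, c m ≤ r m) → 0 < (L.submatrix r c).det

/-- `L` lies in the closure of the totally positive lower unitriangular matrices:
every such minor is nonnegative. -/
def TotNonneg {n : ℕ} (L : Matrix (Fin n) (Fin n) ℝ) : Prop :=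
  ∀ (k : ℕ) (r c : Fin k → Fin n), StrictMono r → StrictMono c →
    (∀ m, c m ≤ r m) → 0 ≤ (L.submatrix r c).det

open Matrix Finset Equiv

section CB

variable {k N : ℕ}

/-- Vanishing of triangular minors: if some row index is below the matching column index. -/
lemma det_submatrix_eq_zero_aux (L : Matrix (Fin N) (Fin N) ℝ)
    (hL : ∀ i j : Fin N, i < j → L i j = 0) (r c : Fin k → Fin N)
    (hr : Monotone r) (hc : Monotone c) (m : Fin k) (hm : r m < c m) :
    (L.submatrix r c).det = 0 := by
  rw [Matrix.det_apply']
  refine Finset.sum_eq_zero fun σ _ => ?_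
  have h : ∃ i : Fin k, m ≤ i ∧ σ i ≤ m := by
    by_contra hcon
    push_neg at hcon
    have hinj : Set.InjOn σ (Finset.Ici m : Finset (Fin k)) :=
      fun a _ b _ hab => σ.injective hab
    have hmaps : ∀ a ∈ (Finset.Ici m : Finset (Fin k)), σ a ∈ (Finset.Ioi m : Finset (Fin k)) :=
      fun a ha => Finset.mem_Ioi.mpr (hcon a (Finset.mem_Ici.mp ha))
    have hcard := Finset.card_le_card_of_injOn σ hmaps hinj
    have hss : (Finset.Ioi m : Finset (Fin k)) ⊂ Finset.Ici m := by
      refine ⟨fun x hx => Finset.mem_Ici.mpr (le_of_lt (Finset.mem_Ioi.mp hx)), fun hsub => ?_⟩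
      exact lt_irrefl m (Finset.mem_Ioi.mp (hsub (Finset.mem_Ici.mpr (le_refl m))))
    exact absurd hcard (not_le.mpr (Finset.card_lt_card hss))
  obtain ⟨i, hmi, him⟩ := h
  have hz : (L.submatrix r c) (σ i) i = 0 :=
    hL _ _ (lt_of_le_of_lt (hr him) (lt_of_lt_of_le hm (hc hmi)))
  exact mul_eq_zero_of_right _ (Finset.prod_eq_zero (Finset.mem_univ i) hz)

/-- The determinant of a principal submatrix (same strictly monotone row/column set)
of a lower unitriangular matrix is `1`. -/
lemma det_submatrix_self_eq_one (L : Matrix (Fin N) (Fin N) ℝ)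
    (h1 : ∀ i, L i i = 1) (hL : ∀ i j : Fin N, i < j → L i j = 0)
    (c : Fin k → Fin N) (hc : StrictMono c) :
    (L.submatrix c c).det = 1 := by
  have ht : (L.submatrix c c).BlockTriangular OrderDual.toDual := by
    intro i j hij
    exact hL _ _ (hc hij)
  rw [Matrix.det_of_lowerTriangular _ ht]
  simp [h1]

/-- Cauchy–Binet over strictly monotone column selections. -/
lemma cauchy_binet [DecidablePred fun g : Fin k → Fin N => StrictMono g]
    (A : Matrix (Fin k) (Fin N) ℝ) (B : Matrix (Fin N) (Fin k) ℝ) :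
    (A * B).det = ∑ g ∈ Finset.univ.filter (fun g : Fin k → Fin N => StrictMono g),
      (A.submatrix id g).det * (B.submatrix g id).det := by
  classical
  have step1 : (A * B).det
      = ∑ p : Fin k → Fin N, (A.submatrix id p).det * ∏ i, B (p i) i := by
    calc (A * B).det
        = ∑ σ : Perm (Fin k), ((Perm.sign σ : ℤ) : ℝ) * ∏ i, ∑ x, A (σ i) x * B x i := by
          simp [Matrix.det_apply', Matrix.mul_apply]
      _ = ∑ σ : Perm (Fin k), ∑ p : Fin k → Fin N,
            ((Perm.sign σ : ℤ) : ℝ) * ∏ i, A (σ i) (p i) * B (p i) i := by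
          refine Finset.sum_congr rfl fun σ _ => ?_
          rw [Finset.prod_univ_sum, Finset.mul_sum, Fintype.piFinset_univ]
      _ = ∑ p : Fin k → Fin N, ∑ σ : Perm (Fin k),
            ((Perm.sign σ : ℤ) : ℝ) * ∏ i, A (σ i) (p i) * B (p i) i := Finset.sum_comm
      _ = ∑ p : Fin k → Fin N, (A.submatrix id p).det * ∏ i, B (p i) i := by
          refine Finset.sum_congr rfl fun p _ => ?_
          rw [Matrix.det_apply', Finset.sum_mul]
          refine Finset.sum_congr rfl fun σ _ => ?_
          rw [Finset.prod_mul_distrib, mul_assoc]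
          rfl
  have step2 : (A * B).det
      = ∑ p ∈ Finset.univ.filter (fun p : Fin k → Fin N => Function.Injective p),
          (A.submatrix id p).det * ∏ i, B (p i) i := by
    rw [step1]
    refine (Finset.sum_subset (Finset.filter_subset _ _) fun p _ hp => ?_).symm
    have hpin : ¬ Function.Injective p := by
      simpa using hp
    rw [Function.not_injective_iff] at hpin
    obtain ⟨a, b, hab, hne⟩ := hpin
    have : (A.submatrix id p).det = 0 := by
      refine Matrix.det_zero_of_column_eq hne fun x => ?_
      simp [hab]
    rw [this, zero_mul]
  rw [step2]
  have step3 : ∀ g ∈ Finset.univ.filter (fun g : Fin k → Fin N => StrictMono g),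
      (A.submatrix id g).det * (B.submatrix g id).det
      = ∑ σ : Perm (Fin k), (A.submatrix id (g ∘ σ)).det * ∏ i, B ((g ∘ σ) i) i := by
    intro g hg
    have : ∀ σ : Perm (Fin k),
        (A.submatrix id (g ∘ σ)).det = ((Perm.sign σ : ℤ) : ℝ) * (A.submatrix id g).det := by
      intro σ
      have : A.submatrix id (g ∘ σ) = (A.submatrix id g).submatrix id σ := by
        rw [Matrix.submatrix_submatrix]
        rfl
      rw [this, Matrix.det_permute']
    have hB : (B.submatrix g id).det
        = ∑ σ : Perm (Fin k), ((Perm.sign σ : ℤ) : ℝ) * ∏ i, B (g (σ i)) i := by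
      rw [Matrix.det_apply']
      rfl
    rw [hB, Finset.mul_sum]
    refine Finset.sum_congr rfl fun σ _ => ?_
    rw [this σ]
    simp only [Function.comp_apply]
    ring
  rw [Finset.sum_congr rfl step3]
  -- now: sum over injective p = sum over (g, σ) of the same summand at g ∘ σ
  rw [← Finset.sum_product']
  refine (Finset.sum_nbij (fun x : (Fin k → Fin N) × Perm (Fin k) => x.1 ∘ x.2)
    ?_ ?_ ?_ ?_).symm
  · rintro ⟨g, σ⟩ hx
    simp only [Finset.mem_product, Finset.mem_filter, Finset.mem_univ, true_and] at hx ⊢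
    exact hx.1.injective.comp σ.injective
  · rintro ⟨g₁, σ₁⟩ h₁ ⟨g₂, σ₂⟩ h₂ heq
    rw [Finset.mem_coe, Finset.mem_product, Finset.mem_filter] at h₁ h₂
    have hg₁ : StrictMono g₁ := h₁.1.2
    have hg₂ : StrictMono g₂ := h₂.1.2
    have heq' : g₁ ∘ σ₁ = g₂ ∘ σ₂ := heq
    have hinj : Function.Injective (g₁ ∘ σ₁) := hg₁.injective.comp σ₁.injective
    set s : Finset (Fin N) := Finset.univ.image (g₁ ∘ σ₁) with hs
    have hcard : s.card = k := by
      rw [hs, Finset.card_image_of_injective _ hinj, Finset.card_univ, Fintype.card_fin]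
    have hmem₁ : ∀ x, g₁ x ∈ s := by
      intro x
      have : g₁ x = (g₁ ∘ σ₁) (σ₁.symm x) := by simp
      rw [this, hs]
      exact Finset.mem_image_of_mem _ (Finset.mem_univ _)
    have hmem₂ : ∀ x, g₂ x ∈ s := by
      intro x
      have : g₂ x = (g₁ ∘ σ₁) (σ₂.symm x) := by rw [heq']; simp
      rw [this, hs]
      exact Finset.mem_image_of_mem _ (Finset.mem_univ _)
    have he₁ : g₁ = ⇑(s.orderEmbOfFin hcard) := Finset.orderEmbOfFin_unique hcard hmem₁ hg₁
    have he₂ : g₂ = ⇑(s.orderEmbOfFin hcard) := Finset.orderEmbOfFin_unique hcard hmem₂ hg₂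
    have hgg : g₁ = g₂ := he₁.trans he₂.symm
    have hσ : σ₁ = σ₂ := Equiv.ext fun x => hg₂.injective (by
      have := congrFun heq' x
      rwa [hgg] at this)
    rw [hgg, hσ]
  · rintro f hf
    rw [Finset.mem_coe, Finset.mem_filter] at hf
    have hinj : Function.Injective f := hf.2
    set s : Finset (Fin N) := Finset.univ.image f with hs
    have hcard : s.card = k := by
      rw [hs, Finset.card_image_of_injective _ hinj, Finset.card_univ, Fintype.card_fin]
    have hmem : ∀ x, f x ∈ s := fun x => Finset.mem_image_of_mem _ (Finset.mem_univ _)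
    set g : Fin k → Fin N := ⇑(s.orderEmbOfFin hcard) with hg
    have hgs : StrictMono g := (s.orderEmbOfFin hcard).strictMono
    have hσinj : Function.Injective
        (fun i => (s.orderIsoOfFin hcard).symm ⟨f i, hmem i⟩) := by
      intro a b hab
      apply hinj
      have := congrArg (fun z => ((s.orderIsoOfFin hcard) z : Fin N)) hab
      simpa using this
    have hσbij := Finite.injective_iff_bijective.mp hσinj
    refine ⟨⟨g, Equiv.ofBijective _ hσbij⟩, ?_, ?_⟩
    · rw [Finset.mem_coe, Finset.mem_product, Finset.mem_filter]
      exact ⟨⟨Finset.mem_univ _, hgs⟩, Finset.mem_univ _⟩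
    · funext i
      show g (Equiv.ofBijective _ hσbij i) = f i
      rw [Equiv.ofBijective_apply]
      simp [hg, Finset.orderEmbOfFin, Finset.coe_orderIsoOfFin_apply]
  · rintro ⟨g, σ⟩ hx
    rfl

lemma key_nonneg (A : Matrix (Fin k) (Fin N) ℝ) (B : Matrix (Fin N) (Fin k) ℝ)
    (hA : ∀ g : Fin k → Fin N, StrictMono g → 0 ≤ (A.submatrix id g).det)
    (hB : ∀ g : Fin k → Fin N, StrictMono g → 0 ≤ (B.submatrix g id).det) :
    0 ≤ (A * B).det := by
  classical
  rw [cauchy_binet]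
  exact Finset.sum_nonneg fun g hg =>
    mul_nonneg (hA g (Finset.mem_filter.mp hg).2) (hB g (Finset.mem_filter.mp hg).2)

lemma key_pos (A : Matrix (Fin k) (Fin N) ℝ) (B : Matrix (Fin N) (Fin k) ℝ)
    (hA : ∀ g : Fin k → Fin N, StrictMono g → 0 ≤ (A.submatrix id g).det)
    (hB : ∀ g : Fin k → Fin N, StrictMono g → 0 ≤ (B.submatrix g id).det)
    (g₀ : Fin k → Fin N) (hg₀ : StrictMono g₀)
    (hA₀ : 0 < (A.submatrix id g₀).det) (hB₀ : 0 < (B.submatrix g₀ id).det) :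
    0 < (A * B).det := by
  classical
  rw [cauchy_binet]
  refine Finset.sum_pos'
    (fun g hg => mul_nonneg (hA g (Finset.mem_filter.mp hg).2) (hB g (Finset.mem_filter.mp hg).2))
    ⟨g₀, Finset.mem_filter.mpr ⟨Finset.mem_univ _, hg₀⟩, mul_pos hA₀ hB₀⟩

end CB

/-- For a lower-triangular matrix in the closure, every strictly monotone minor is
nonnegative (minors with `i₀ ≱ i₁` vanish automatically). -/
lemma minor_nonneg {N : ℕ} {L : Matrix (Fin N) (Fin N) ℝ}
    (hL : ∀ i j : Fin N, i < j → L i j = 0) (hT : TotNonneg L)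
    {k : ℕ} (r c : Fin k → Fin N) (hr : StrictMono r) (hc : StrictMono c) :
    0 ≤ (L.submatrix r c).det := by
  by_cases h : ∀ m, c m ≤ r m
  · exact hT k r c hr hc h
  · push_neg at h
    obtain ⟨m, hm⟩ := h
    exact le_of_eq (det_submatrix_eq_zero_aux L hL r c hr.monotone hc.monotone m hm).symm

lemma totPos_totNonneg {N : ℕ} {L : Matrix (Fin N) (Fin N) ℝ} (h : TotPos L) : TotNonneg L :=
  fun k r c hr hc hcr => (h k r c hr hc hcr).le

/-- If `L₀` is totally positive and `L₁` lies in the closure of the totally positive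
lower unitriangular matrices, then `L₀L₁` and `L₁L₀` are totally positive; moreover the
closure is closed under multiplication. -/
theorem totPos_mul (n : ℕ) (L₀ L₁ : Matrix (Fin (n + 1)) (Fin (n + 1)) ℝ)
    (h₀ : LowerUni L₀) (h₁ : LowerUni L₁) :
    (TotPos L₀ → TotNonneg L₁ → TotPos (L₀ * L₁) ∧ TotPos (L₁ * L₀)) ∧
    (TotNonneg L₀ → TotNonneg L₁ → TotNonneg (L₀ * L₁)) := by
  obtain ⟨h₀d, h₀l⟩ := h₀
  obtain ⟨h₁d, h₁l⟩ := h₁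
  have hsub : ∀ (M M' : Matrix (Fin (n + 1)) (Fin (n + 1)) ℝ) {k : ℕ}
      (r c : Fin k → Fin (n + 1)),
      (M * M').submatrix r c = (M.submatrix r id) * (M'.submatrix id c) := by
    intro M M' k r c
    have := Matrix.submatrix_mul_equiv M M' r (Equiv.refl (Fin (n + 1))) c
    simpa using this.symm
  have e1 : ∀ (M : Matrix (Fin (n + 1)) (Fin (n + 1)) ℝ) {k : ℕ}
      (r : Fin k → Fin (n + 1)) (g : Fin k → Fin (n + 1)),
      (M.submatrix r id).submatrix id g = M.submatrix r g := by
    intro M k r g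
    rw [Matrix.submatrix_submatrix, Function.comp_id, Function.id_comp]
  have e2 : ∀ (M : Matrix (Fin (n + 1)) (Fin (n + 1)) ℝ) {k : ℕ}
      (c : Fin k → Fin (n + 1)) (g : Fin k → Fin (n + 1)),
      (M.submatrix id c).submatrix g id = M.submatrix g c := by
    intro M k c g
    rw [Matrix.submatrix_submatrix, Function.id_comp, Function.comp_id]
  constructor
  · intro hp₀ hn₁
    have hn₀ : TotNonneg L₀ := totPos_totNonneg hp₀
    constructor
    · intro k r c hr hc hcr
      rw [hsub]
      refine key_pos _ _ ?_ ?_ c hc ?_ ?_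
      · intro g hg
        rw [e1]
        exact minor_nonneg h₀l hn₀ r g hr hg
      · intro g hg
        rw [e2]
        exact minor_nonneg h₁l hn₁ g c hg hc
      · rw [e1]
        exact hp₀ k r c hr hc hcr
      · rw [e2]
        rw [det_submatrix_self_eq_one L₁ h₁d h₁l c hc]
        exact one_pos
    · intro k r c hr hc hcr
      rw [hsub]
      refine key_pos _ _ ?_ ?_ r hr ?_ ?_
      · intro g hg
        rw [e1]
        exact minor_nonneg h₁l hn₁ r g hr hg
      · intro g hg
        rw [e2]
        exact minor_nonneg h₀l hn₀ g c hg hc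
      · rw [e1]
        rw [det_submatrix_self_eq_one L₁ h₁d h₁l r hr]
        exact one_pos
      · rw [e2]
        exact hp₀ k r c hr hc hcr
  · intro hn₀ hn₁ k r c hr hc hcr
    rw [hsub]
    refine key_nonneg _ _ ?_ ?_
    · intro g hg
      rw [e1]
      exact minor_nonneg h₀l hn₀ r g hr hg
    · intro g hg
      rw [e2]
      exact minor_nonneg h₁l hn₁ g c hg hc
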